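/- Let M be a discretely ordered ring that is an integer part of an ordered field R (i.e., M ⊆ R and every r in R has some m in M with m ≤ r < m + 1). Then the quotient field of M, viewed inside R, is dense in R: for all a < b in R there exists q in F(M) with a < q < b. -/

import Mathlib

/-- If a discretely ordered subring `M` of an ordered field `R` is an integer part
of `R`, then the quotient field of `M` (quotients of elements of `M`, viewed inside
`R`) is dense in `R`. -/
theorem stmt1 {R : Type*} [Field R] [LinearOrder R] [IsStrictOrderedRing R] (M : Subring R)
    (hdisc : ∀ m ∈ M, 0 < m → (1 : R) ≤ m)
    (hIP : ∀ r : R, ∃ m ∈ M, m ≤ r ∧ r < m + 1) :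
    ∀ a b : R, a < b → ∃ p ∈ M, ∃ k ∈ M, 0 < k ∧ a < p / k ∧ p / k < b := by
  intro a b hab
  have hba : (0:R) < b - a := by linarith
  obtain ⟨k, hkM, hk1, hk2⟩ := hIP ((b - a)⁻¹)
  set K := k + 1 with hK
  have hKM : K ∈ M := M.add_mem hkM M.one_mem
  have hKpos : (0:R) < K := lt_of_le_of_lt (by positivity) hk2
  have hKinv : K⁻¹ < b - a := by
    rw [inv_lt_comm₀ hKpos hba]
    exact hk2
  obtain ⟨m, hmM, hm1, hm2⟩ := hIP (K * a)
  refine ⟨m + 1, M.add_mem hmM M.one_mem, K, hKM, hKpos, ?_, ?_⟩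
  · rw [lt_div_iff₀ hKpos]
    linarith
  · rw [div_lt_iff₀ hKpos]
    have : K⁻¹ * K = 1 := inv_mul_cancel₀ hKpos.ne'
    nlinarith
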